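/- arXiv:1208.3054 — 3 statements merged into one kernel-verified Lean document; each statement's English description precedes it below -/
import Mathlib

section
/- Let G = (V, E) be a finite simple connected undirected graph, L : V → ℕ a capacity function and k a positive integer, and suppose LP1 has a feasible solution (x, y). Then there exist a 5-feasible assignment (x', y') and a 21-caterpillar structure (P, P') for (x', y') such that every vertex v ∈ V \ (V(P) ∪ V(P')) has an integral y'-value, and the first and last elements of the sequence P' equal nil. -/
/-- The LP relaxation LP1 of the capacitated `k`-center problem, at distance threshold `δ`
(a `δ`-feasible assignment).  `x u v` is the (fractional) amount of client `v` assigned to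
center `u`, and `y u` is the (fractional) opening of a center at `u`.  Distances larger
than `δ`, in particular between vertices in different connected components, forbid any
assignment. -/
def LPFeasible {V : Type} [Fintype V] (G : SimpleGraph V) (L : V → ℕ) (k δ : ℕ)
    (x : V → V → ℝ) (y : V → ℝ) : Prop :=
  (∀ u v, 0 ≤ x u v) ∧ (∀ u, 0 ≤ y u) ∧
  (∑ u, y u = (k : ℝ)) ∧
  (∀ u v, x u v ≤ y u) ∧
  (∀ u, ∑ v, x u v ≤ (L u : ℝ) * y u) ∧
  (∀ v, ∑ u, x u v = 1) ∧
  (∀ u, y u ≤ 1) ∧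
  (∀ u v, ¬ (G.Reachable u v ∧ G.dist u v ≤ δ) → x u v = 0)

/-- A (hard) capacitated `k`-center solution of `G` at distance `δ`: a set `S` of exactly
`k` centers and an assignment `φ` of every vertex to a center of `S` at distance at most
`δ`, such that at most `L u` vertices are assigned to each center `u`. -/
def HasCapSolution {V : Type} (G : SimpleGraph V) (L : V → ℕ) (k δ : ℕ) : Prop :=
  ∃ (S : Finset V) (φ : V → V), S.card = k ∧ (∀ v, φ v ∈ S) ∧
    (∀ v, G.Reachable v (φ v) ∧ G.dist v (φ v) ≤ δ) ∧
    (∀ u ∈ S, {v | φ v = u}.ncard ≤ L u)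

/-- The data of a caterpillar structure: a spine length `p`, spine vertices
`vtx 1, …, vtx p` (the sequence `P = (v_1, …, v_p)`) and leaves
`leaf 0, …, leaf (p+1)` (the sequence `P' = (v'_0, …, v'_{p+1})`, where `none` plays the
role of `nil`).  Values of `vtx`/`leaf` outside these index ranges are irrelevant. -/
structure Caterpillar (V : Type) where
  p : ℕ
  vtx : ℕ → V
  leaf : ℕ → Option V

/-- `V(P)`: the set of spine vertices of a caterpillar structure. -/
def Caterpillar.spine {V : Type} (C : Caterpillar V) : Set V :=
  {w | ∃ i, 1 ≤ i ∧ i ≤ C.p ∧ C.vtx i = w}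

/-- `V(P')`: the set of non-nil leaves of a caterpillar structure. -/
def Caterpillar.leaves {V : Type} (C : Caterpillar V) : Set V :=
  {w | ∃ i ≤ C.p + 1, C.leaf i = some w}

/-- `C` is a `δ`-caterpillar structure for the assignment with `y`-values `y`:
the spine vertices are distinct with `y`-value `1` and consecutive spine vertices are at
distance at most `δ`; leaves are vertices outside the spine with fractional `y`-values,
each leaf `leaf i` (`1 ≤ i ≤ p`) has `L (leaf i) ≤ L (vtx i)` and is at distance at most
`δ` from `vtx i`; `leaf 0` (resp. `leaf (p+1)`), if present, is at distance at most `δ`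
from `vtx 1` (resp. `vtx p`); the non-nil leaves are pairwise distinct; and the sum of the
`y`-values of the non-nil leaves is an integer. -/
def IsCaterpillar {V : Type} (G : SimpleGraph V) (L : V → ℕ) (y : V → ℝ) (δ : ℕ)
    (C : Caterpillar V) : Prop :=
  (∀ i j, 1 ≤ i → i < j → j ≤ C.p → C.vtx i ≠ C.vtx j) ∧
  (∀ i, 1 ≤ i → i ≤ C.p → y (C.vtx i) = 1) ∧
  (∀ i, 1 ≤ i → i + 1 ≤ C.p → G.dist (C.vtx i) (C.vtx (i + 1)) ≤ δ) ∧
  (∀ i ≤ C.p + 1, ∀ w, C.leaf i = some w → w ∉ C.spine) ∧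
  (∀ i, 1 ≤ i → i ≤ C.p → ∀ w, C.leaf i = some w →
      L w ≤ L (C.vtx i) ∧ 0 < y w ∧ y w < 1 ∧ G.dist (C.vtx i) w ≤ δ) ∧
  (∀ w, C.leaf 0 = some w → G.dist w (C.vtx 1) ≤ δ ∧ 0 < y w ∧ y w < 1) ∧
  (∀ w, C.leaf (C.p + 1) = some w → G.dist w (C.vtx C.p) ≤ δ ∧ 0 < y w ∧ y w < 1) ∧
  (∀ i j, i < j → j ≤ C.p + 1 → ∀ w w', C.leaf i = some w → C.leaf j = some w' → w ≠ w') ∧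
  (∃ n : ℤ, ∑ i ∈ Finset.range (C.p + 2), (C.leaf i).elim 0 y = (n : ℝ))

/-- `Γ(C)`: the set of spine vertices `vtx i` for which there are indices
`i₀ < i < i₁` with non-nil leaves `leaf i₀` and `leaf i₁` of capacity strictly larger than
`L (vtx i)`. -/
def Gamma {V : Type} (L : V → ℕ) (C : Caterpillar V) : Set V :=
  {w | ∃ i, 1 ≤ i ∧ i ≤ C.p ∧ C.vtx i = w ∧
    ∃ i₀ i₁, i₀ < i ∧ i < i₁ ∧ i₁ ≤ C.p + 1 ∧
      (∃ w₀, C.leaf i₀ = some w₀ ∧ L w < L w₀) ∧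
      (∃ w₁, C.leaf i₁ = some w₁ ∧ L w < L w₁)}


set_option linter.unusedSectionVars false

section Aux

noncomputable def maxElt {V : Type} (L : V → ℕ) (s : Finset V) (h : s.Nonempty) : V :=
  (s.exists_max_image L h).choose

lemma maxElt_mem {V : Type} (L : V → ℕ) (s : Finset V) (h : s.Nonempty) :
    maxElt L s h ∈ s := (s.exists_max_image L h).choose_spec.1

lemma le_maxElt {V : Type} (L : V → ℕ) (s : Finset V) (h : s.Nonempty) :
    ∀ v ∈ s, L v ≤ L (maxElt L s h) := (s.exists_max_image L h).choose_spec.2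

noncomputable def fill {V : Type} [DecidableEq V] (L : V → ℕ) (s : Finset V) (m : ℝ) : V → ℝ :=
  if h : s.Nonempty then
    fun v => if v = maxElt L s h then min m 1
      else fill L (s.erase (maxElt L s h)) (m - min m 1) v
  else fun _ => 0
termination_by s.card
decreasing_by exact Finset.card_erase_lt_of_mem (maxElt_mem L s h)

lemma fill_empty {V : Type} [DecidableEq V] (L : V → ℕ) (m : ℝ) (v : V) :
    fill L ∅ m v = 0 := by
  rw [fill]; simp

lemma fill_of_nonempty {V : Type} [DecidableEq V] (L : V → ℕ) (s : Finset V) (h : s.Nonempty)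
    (m : ℝ) (v : V) :
    fill L s m v = if v = maxElt L s h then min m 1
      else fill L (s.erase (maxElt L s h)) (m - min m 1) v := by
  rw [fill]; simp [h]

section FillLemmas
variable {V : Type} [DecidableEq V] (L : V → ℕ)

lemma fill_nonneg : ∀ (s : Finset V) (m : ℝ), 0 ≤ m → ∀ v, 0 ≤ fill L s m v := by
  intro s
  induction s using Finset.strongInduction with
  | _ s ih =>
    intro m hm v
    rcases s.eq_empty_or_nonempty with rfl | h
    · rw [fill_empty]
    · rw [fill_of_nonempty L s h]
      split
      · exact le_min hm zero_le_one
      · exact ih _ (Finset.erase_ssubset (maxElt_mem L s h)) _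
          (by simp [min_le_left m 1]) v

lemma fill_le_one : ∀ (s : Finset V) (m : ℝ) (v : V), fill L s m v ≤ 1 := by
  intro s
  induction s using Finset.strongInduction with
  | _ s ih =>
    intro m v
    rcases s.eq_empty_or_nonempty with rfl | h
    · rw [fill_empty]; norm_num
    · rw [fill_of_nonempty L s h]
      split
      · exact min_le_right m 1
      · exact ih _ (Finset.erase_ssubset (maxElt_mem L s h)) _ v

lemma fill_of_not_mem : ∀ (s : Finset V) (m : ℝ) (v : V), v ∉ s → fill L s m v = 0 := by
  intro s
  induction s using Finset.strongInduction with
  | _ s ih =>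
    intro m v hv
    rcases s.eq_empty_or_nonempty with rfl | h
    · rw [fill_empty]
    · rw [fill_of_nonempty L s h]
      have : v ≠ maxElt L s h := fun hc => hv (hc ▸ maxElt_mem L s h)
      rw [if_neg this]
      exact ih _ (Finset.erase_ssubset (maxElt_mem L s h)) _ v
        (fun hc => hv (Finset.mem_of_mem_erase hc))

lemma fill_zero : ∀ (s : Finset V) (v : V), fill L s 0 v = 0 := by
  intro s
  induction s using Finset.strongInduction with
  | _ s ih =>
    intro v
    rcases s.eq_empty_or_nonempty with rfl | h
    · rw [fill_empty]
    · rw [fill_of_nonempty L s h]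
      have h01 : min (0:ℝ) 1 = 0 := by norm_num
      rw [h01]
      split
      · rfl
      · rw [show (0:ℝ) - 0 = 0 by ring]
        exact ih _ (Finset.erase_ssubset (maxElt_mem L s h)) v

lemma fill_threshold : ∀ (s : Finset V) (m : ℝ), 0 ≤ m → ∀ v w, w ∈ s →
    0 < fill L s m v → fill L s m w < 1 → L w ≤ L v := by
  intro s
  induction s using Finset.strongInduction with
  | _ s ih =>
    intro m hm v w hw hv hw1
    rcases s.eq_empty_or_nonempty with rfl | h
    · rw [fill_empty] at hv; linarith
    · set u := maxElt L s h with hu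
      rw [fill_of_nonempty L s h] at hv hw1
      by_cases hvu : v = u
      · exact hvu ▸ le_maxElt L s h w hw
      · rw [if_neg hvu] at hv
        by_cases hwu : w = u
        · rw [if_pos hwu] at hw1
          have hmlt : m < 1 := by
            rcases min_cases m 1 with ⟨he, _⟩ | ⟨he, hle⟩
            · rw [he] at hw1; exact hw1
            · rw [he] at hw1; linarith
          have hmin : min m 1 = m := min_eq_left (le_of_lt hmlt)
          rw [hmin, sub_self, fill_zero] at hv
          linarith
        · rw [if_neg hwu] at hw1
          exact ih _ (Finset.erase_ssubset (maxElt_mem L s h)) _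
            (by simp [min_le_left m 1]) v w (Finset.mem_erase.2 ⟨hwu, hw⟩) hv hw1

lemma fill_unique_frac : ∀ (s : Finset V) (m : ℝ), 0 ≤ m → ∀ v w,
    0 < fill L s m v → fill L s m v < 1 → 0 < fill L s m w → fill L s m w < 1 → v = w := by
  intro s
  induction s using Finset.strongInduction with
  | _ s ih =>
    intro m hm v w hv0 hv1 hw0 hw1
    rcases s.eq_empty_or_nonempty with rfl | h
    · rw [fill_empty] at hv0; linarith
    · set u := maxElt L s h with hu
      rw [fill_of_nonempty L s h] at hv0 hv1 hw0 hw1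
      have key : ∀ z : V, z ≠ u →
          (if z = u then min m 1 else fill L (s.erase u) (m - min m 1) z) < 1 →
          0 < (if z = u then min m 1 else fill L (s.erase u) (m - min m 1) z) →
          (if (u:V) = u then min m 1 else fill L (s.erase u) (m - min m 1) u) < 1 → False := by
        intro z hz h1 h0 hu1
        rw [if_neg hz] at h0
        rw [if_pos rfl] at hu1
        have hmlt : m < 1 := by
          rcases min_cases m 1 with ⟨he, _⟩ | ⟨he, hle⟩
          · rw [he] at hu1; exact hu1
          · rw [he] at hu1; linarith
        have hmin : min m 1 = m := min_eq_left (le_of_lt hmlt)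
        rw [hmin, sub_self, fill_zero] at h0
        linarith
      by_cases hvu : v = u
      · by_cases hwu : w = u
        · rw [hvu, hwu]
        · exact (key w hwu hw1 hw0 (by rw [hvu] at hv1; exact hv1)).elim
      · by_cases hwu : w = u
        · exact (key v hvu hv1 hv0 (by rw [hwu] at hw1; exact hw1)).elim
        · rw [if_neg hvu] at hv0 hv1
          rw [if_neg hwu] at hw0 hw1
          exact ih _ (Finset.erase_ssubset (maxElt_mem L s h)) _
            (by simp [min_le_left m 1]) v w hv0 hv1 hw0 hw1

lemma fill_sum : ∀ (s : Finset V) (m : ℝ), 0 ≤ m → m ≤ s.card →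
    ∑ v ∈ s, fill L s m v = m := by
  intro s
  induction s using Finset.strongInduction with
  | _ s ih =>
    intro m hm hmc
    rcases s.eq_empty_or_nonempty with rfl | h
    · simp at hmc ⊢; linarith
    · set u := maxElt L s h with hu
      have hus : u ∈ s := maxElt_mem L s h
      have hsplit : ∑ v ∈ s, fill L s m v
          = fill L s m u + ∑ v ∈ s.erase u, fill L s m v :=
        (Finset.add_sum_erase s _ hus).symm
      have h1 : fill L s m u = min m 1 := by
        rw [fill_of_nonempty L s h, if_pos rfl]
      have h2 : ∀ v ∈ s.erase u, fill L s m v = fill L (s.erase u) (m - min m 1) v := by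
        intro v hv
        rw [fill_of_nonempty L s h, if_neg (Finset.mem_erase.1 hv).1]
      have hcard : 1 ≤ s.card := Finset.card_pos.2 h
      have hrec : ∑ v ∈ s.erase u, fill L (s.erase u) (m - min m 1) v = m - min m 1 := by
        apply ih _ (Finset.erase_ssubset hus)
        · simp [min_le_left m 1]
        · rw [Finset.card_erase_of_mem hus]
          rcases le_or_gt 1 m with hc | hc
          · rw [min_eq_right hc]
            have : ((s.card - 1 : ℕ) : ℝ) = (s.card : ℝ) - 1 := by
              push_cast [hcard]; ring
            rw [this]; linarith
          · rw [min_eq_left (le_of_lt hc), sub_self]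
            positivity
      rw [hsplit, h1, Finset.sum_congr rfl h2, hrec]
      ring

lemma maxElt_fill_one (s : Finset V) (h : s.Nonempty) (m : ℝ) (hm : 1 ≤ m) :
    fill L s m (maxElt L s h) = 1 := by
  rw [fill_of_nonempty L s h, if_pos rfl, min_eq_right hm]

end FillLemmas

section Exchange
variable {V : Type} [DecidableEq V] (L : V → ℕ)

lemma exchange_le (s : Finset V) (g g' : V → ℝ)
    (hsum : ∑ v ∈ s, g v = ∑ v ∈ s, g' v)
    (hg'0 : ∀ v ∈ s, 0 ≤ g' v) (hg'1 : ∀ v ∈ s, g' v ≤ 1)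
    (hTH : ∀ v ∈ s, ∀ w ∈ s, 0 < g v → g w < 1 → L w ≤ L v) :
    ∑ v ∈ s, (L v : ℝ) * g' v ≤ ∑ v ∈ s, (L v : ℝ) * g v := by
  classical
  set B := s.filter (fun v => g v < g' v) with hB
  rcases B.eq_empty_or_nonempty with hBe | hBne
  · apply Finset.sum_le_sum
    intro v hv
    have hnl : ¬ g v < g' v := by
      intro hlt
      have : v ∈ B := Finset.mem_filter.2 ⟨hv, hlt⟩
      rw [hBe] at this; exact absurd this (Finset.notMem_empty v)
    have hge : g' v ≤ g v := le_of_not_gt hnl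
    have hL0 : (0:ℝ) ≤ (L v : ℝ) := Nat.cast_nonneg _
    nlinarith
  · set lam : ℝ := (L (maxElt L B hBne) : ℝ) with hlam
    have hptwise : ∀ v ∈ s, 0 ≤ ((L v : ℝ) - lam) * (g v - g' v) := by
      intro v hv
      rcases lt_trichotomy (g v) (g' v) with hlt | heq | hgt
      · have hvB : v ∈ B := Finset.mem_filter.2 ⟨hv, hlt⟩
        have hle : L v ≤ L (maxElt L B hBne) := le_maxElt L B hBne v hvB
        have h1 : (L v : ℝ) - lam ≤ 0 := sub_nonpos.2 (by rw [hlam]; exact_mod_cast hle)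
        nlinarith
      · rw [heq]; simp
      · have hv0 : 0 < g v := lt_of_le_of_lt (hg'0 v hv) hgt
        have hw : maxElt L B hBne ∈ B := maxElt_mem L B hBne
        have hwS : maxElt L B hBne ∈ s := (Finset.mem_filter.1 hw).1
        have hwlt : g (maxElt L B hBne) < 1 :=
          lt_of_lt_of_le (Finset.mem_filter.1 hw).2 (hg'1 _ hwS)
        have hle : L (maxElt L B hBne) ≤ L v := hTH v hv _ hwS hv0 hwlt
        have h1 : lam ≤ (L v : ℝ) := by rw [hlam]; exact_mod_cast hle
        nlinarith
    have hkey : ∑ v ∈ s, (((L v : ℝ) - lam) * (g v - g' v))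
        = (∑ v ∈ s, (L v : ℝ) * g v) - (∑ v ∈ s, (L v : ℝ) * g' v) := by
      have expand : ∀ v ∈ s, ((L v : ℝ) - lam) * (g v - g' v)
          = ((L v : ℝ) * g v - (L v : ℝ) * g' v) - (lam * g v - lam * g' v) :=
        fun v _ => by ring
      rw [Finset.sum_congr rfl expand, Finset.sum_sub_distrib, Finset.sum_sub_distrib,
        Finset.sum_sub_distrib, ← Finset.mul_sum, ← Finset.mul_sum, hsum]
      ring
    have hnn : 0 ≤ ∑ v ∈ s, (((L v : ℝ) - lam) * (g v - g' v)) :=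
      Finset.sum_nonneg hptwise
    linarith [hkey ▸ hnn]
end Exchange



lemma exists_maximal_separated {V : Type} [Fintype V] (G : SimpleGraph V) (hG : G.Connected) :
    ∃ S : Finset V, S.Nonempty ∧ (∀ a ∈ S, ∀ b ∈ S, a ≠ b → 3 ≤ G.dist a b) ∧
      (∀ v : V, ∃ s ∈ S, G.dist v s ≤ 2) := by
  classical
  have hne : Nonempty V := hG.nonempty
  obtain ⟨v₀⟩ := hne
  set P : Finset V → Prop := fun T => ∀ a ∈ T, ∀ b ∈ T, a ≠ b → 3 ≤ G.dist a b with hP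
  set F : Finset (Finset V) := Finset.univ.filter P with hF
  have hmemF : ∀ T, T ∈ F ↔ P T := by
    intro T; rw [hF, Finset.mem_filter]; simp
  have hsing : ({v₀} : Finset V) ∈ F := by
    refine (hmemF _).2 ?_
    intro a ha b hb hab
    simp only [Finset.mem_singleton] at ha hb
    exact absurd (ha.trans hb.symm) hab
  obtain ⟨S, hSF, hSmax⟩ := F.exists_max_image Finset.card ⟨_, hsing⟩
  have hPS : P S := (hmemF S).1 hSF
  refine ⟨S, ?_, hPS, ?_⟩
  · rw [← Finset.card_pos]
    have h1 := hSmax _ hsing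
    rw [Finset.card_singleton] at h1
    omega
  · intro v
    by_cases hv : v ∈ S
    · exact ⟨v, hv, by simp [SimpleGraph.dist_self]⟩
    · by_contra hcon
      push_neg at hcon
      have hins : P (insert v S) := by
        intro a ha b hb hab
        rcases Finset.mem_insert.1 ha with rfl | haS
        · rcases Finset.mem_insert.1 hb with rfl | hbS
          · exact absurd rfl hab
          · have := hcon b hbS
            omega
        · rcases Finset.mem_insert.1 hb with rfl | hbS
          · have := hcon a haS
            rw [G.dist_comm]
            omega
          · exact hPS a haS b hbS hab
      have hcard := hSmax _ ((hmemF _).2 hins)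
      rw [Finset.card_insert_of_notMem hv] at hcard
      omega

section Centers
variable {V : Type} [Fintype V] [DecidableEq V]

/-- the cell (fiber) of a center under the nearest-center map -/
def cellOf (ctr : V → V) (s : V) : Finset V := Finset.univ.filter (fun v => ctr v = s)

lemma mem_cellOf (ctr : V → V) (s v : V) : v ∈ cellOf ctr s ↔ ctr v = s := by
  simp [cellOf]

lemma exists_ctr (G : SimpleGraph V) (hG : G.Connected) (S : Finset V) (hSne : S.Nonempty)
    (hsep : ∀ a ∈ S, ∀ b ∈ S, a ≠ b → 3 ≤ G.dist a b)
    (hcov : ∀ v : V, ∃ s ∈ S, G.dist v s ≤ 2) :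
    ∃ ctr : V → V, (∀ v, ctr v ∈ S) ∧ (∀ v, G.dist v (ctr v) ≤ 2) ∧
      (∀ s ∈ S, ctr s = s) ∧ (∀ v, ∀ s ∈ S, G.dist v s ≤ 1 → ctr v = s) := by
  classical
  have hch : ∀ v : V, ∃ s ∈ S, ∀ s' ∈ S, G.dist v s ≤ G.dist v s' := fun v =>
    S.exists_min_image (G.dist v) hSne
  choose ctr hctrS hctrmin using hch
  have hclose : ∀ v, G.dist v (ctr v) ≤ 2 := by
    intro v
    obtain ⟨s, hs, hs2⟩ := hcov v
    exact le_trans (hctrmin v s hs) hs2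
  have hnear : ∀ v, ∀ s ∈ S, G.dist v s ≤ 1 → ctr v = s := by
    intro v s hs h1
    by_contra hne
    have h2 : G.dist v (ctr v) ≤ 1 := le_trans (hctrmin v s hs) h1
    have h3 : G.dist s (ctr v) ≤ G.dist s v + G.dist v (ctr v) := hG.dist_triangle
    rw [G.dist_comm (u := s) (v := v)] at h3
    have hsep' := hsep s hs (ctr v) (hctrS v) (fun hc => hne hc.symm)
    omega
  have hfix : ∀ s ∈ S, ctr s = s := by
    intro s hs
    exact hnear s s hs (by simp [SimpleGraph.dist_self])
  exact ⟨ctr, hctrS, hclose, hfix, hnear⟩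

end Centers


section Sek
variable {V : Type} [DecidableEq V]

lemma sekanina (d : V → V → ℕ)
    (hsym : ∀ a b, d a b = d b a) (hself : ∀ a, d a a = 0)
    (htri : ∀ a b c, d a c ≤ d a b + d b c) :
    ∀ (S : Finset V) (r : V), r ∈ S →
    (∀ a ∈ S, ∀ b ∈ S, Relation.ReflTransGen (fun p q => p ∈ S ∧ q ∈ S ∧ d p q ≤ 5) a b) →
    ∃ l : List V, l.head? = some r ∧ l.Nodup ∧ l.toFinset = S ∧
      List.Chain' (fun a b => d a b ≤ 15) l ∧ ∀ e ∈ l.getLast?, d r e ≤ 5 := by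
  intro S
  induction S using Finset.strongInduction with
  | _ S ihS =>
    intro r hr hconn
    classical
    set R : V → V → Prop := fun p q => p ∈ S ∧ q ∈ S ∧ d p q ≤ 5 with hR
    set S' : Finset V := S.erase r with hS'
    rcases S'.eq_empty_or_nonempty with hSe | hSne
    · -- S = {r}
      have hSr : S = {r} := by
        apply Finset.Subset.antisymm
        · intro a ha
          by_cases har : a = r
          · simp [har]
          · have : a ∈ S' := Finset.mem_erase.2 ⟨har, ha⟩
            rw [hSe] at this
            exact absurd this (Finset.notMem_empty a)
        · intro a ha
          rw [Finset.mem_singleton] at ha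
          exact ha ▸ hr
      refine ⟨[r], rfl, by simp, by simp [hSr], List.isChain_singleton r, ?_⟩
      intro e he
      simp at he
      rw [he, hself]
      norm_num
    · -- find z ∈ S' close to r
      obtain ⟨a₀, ha₀⟩ := hSne
      have ha₀S : a₀ ∈ S := Finset.mem_of_mem_erase ha₀
      have hz : ∃ z ∈ S', d r z ≤ 5 := by
        by_contra hno
        push_neg at hno
        have main : ∀ b, Relation.ReflTransGen R a₀ b → b ∈ S' := by
          intro b hb
          induction hb with
          | refl => exact ha₀
          | @tail c b' hac step ih =>
            have hb'S : b' ∈ S := step.2.1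
            by_cases hb'r : b' = r
            · exfalso
              have h5 : d c b' ≤ 5 := step.2.2
              have := hno c ih
              rw [hb'r] at h5
              rw [hsym r c] at this
              omega
            · exact Finset.mem_erase.2 ⟨hb'r, hb'S⟩
        have := main r (hconn a₀ ha₀S r hr)
        exact absurd this (Finset.notMem_erase r S)
      obtain ⟨z, hzS', hdrz⟩ := hz
      set R' : V → V → Prop := fun p q => p ∈ S' ∧ q ∈ S' ∧ d p q ≤ 5 with hR'
      have hR'symm : Symmetric R' := by
        intro p q hpq
        exact ⟨hpq.2.1, hpq.1, by rw [hsym]; exact hpq.2.2⟩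
      set C : Finset V := S'.filter (fun b => Relation.ReflTransGen R' z b) with hC
      have memC : ∀ w, w ∈ C ↔ (w ∈ S' ∧ Relation.ReflTransGen R' z w) := by
        intro w; rw [hC, Finset.mem_filter]
      have hzC : z ∈ C := (memC z).2 ⟨hzS', Relation.ReflTransGen.refl⟩
      have hCsub : C ⊆ S' := Finset.filter_subset _ _
      have extendC : ∀ c b, c ∈ C → R' c b → b ∈ C := by
        intro c b hc hstep
        exact (memC b).2 ⟨hstep.2.1, Relation.ReflTransGen.tail ((memC c).1 hc).2 hstep⟩
      set RC : V → V → Prop := fun p q => p ∈ C ∧ q ∈ C ∧ d p q ≤ 5 with hRC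
      have endC : ∀ a c, Relation.ReflTransGen RC a c → a ∈ C → c ∈ C := by
        intro a c h ha
        induction h with
        | refl => exact ha
        | tail _ step _ => exact step.2.1
      have lift : ∀ a b, Relation.ReflTransGen R' a b → a ∈ C →
          Relation.ReflTransGen RC a b := by
        intro a b h
        induction h with
        | refl => intro _; exact Relation.ReflTransGen.refl
        | @tail c b' hac step ih =>
          intro haC
          have hcC : c ∈ C := endC a c (ih haC) haC
          have hb'C : b' ∈ C := extendC c b' hcC step
          exact Relation.ReflTransGen.tail (ih haC) ⟨hcC, hb'C, step.2.2⟩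
      have connC : ∀ a ∈ C, ∀ b ∈ C, Relation.ReflTransGen RC a b := by
        intro a ha b hb
        have za : Relation.ReflTransGen R' z a := ((memC a).1 ha).2
        have zb : Relation.ReflTransGen R' z b := ((memC b).1 hb).2
        have az : Relation.ReflTransGen R' a z :=
          by haveI : Std.Symm R' := ⟨fun a b h => hR'symm h⟩; exact Std.Symm.symm _ _ za
        exact lift a b (az.trans zb) ha
      -- the rest of S
      set S'' : Finset V := S \ C with hS''
      have hrS'' : r ∈ S'' := by
        rw [hS'', Finset.mem_sdiff]
        refine ⟨hr, fun hc => ?_⟩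
        exact absurd (hCsub hc) (Finset.notMem_erase r S)
      have hzS : z ∈ S := Finset.mem_of_mem_erase hzS'
      have hCssub : C ⊂ S := by
        refine Finset.ssubset_iff_of_subset (hCsub.trans (Finset.erase_subset r S)) |>.2 ?_
        exact ⟨r, hr, fun hc => absurd (hCsub hc) (Finset.notMem_erase r S)⟩
      have hzNotS'' : z ∉ S'' := by
        rw [hS'', Finset.mem_sdiff]
        intro h; exact h.2 hzC
      have hS''ssub : S'' ⊂ S := by
        refine Finset.ssubset_iff_of_subset (Finset.sdiff_subset) |>.2 ⟨z, hzS, hzNotS''⟩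
      set R'' : V → V → Prop := fun p q => p ∈ S'' ∧ q ∈ S'' ∧ d p q ≤ 5 with hR''
      have hR''symm : Symmetric R'' := by
        intro p q hpq
        exact ⟨hpq.2.1, hpq.1, by rw [hsym]; exact hpq.2.2⟩
      have toR : ∀ a ∈ S'', Relation.ReflTransGen R'' a r := by
        intro a haS''
        have haS : a ∈ S := (Finset.mem_sdiff.1 haS'').1
        have hpath : Relation.ReflTransGen R a r := hconn a haS r hr
        clear haS
        revert haS''
        induction hpath using Relation.ReflTransGen.head_induction_on with
        | refl => intro _; exact Relation.ReflTransGen.refl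
        | @head a' c step htl ih =>
          intro ha'S''
          by_cases har : a' = r
          · rw [har]
          · by_cases hc : c ∈ S''
            · exact Relation.ReflTransGen.head ⟨ha'S'', hc, step.2.2⟩ (ih hc)
            · exfalso
              have hcS : c ∈ S := step.2.1
              have hcC : c ∈ C := by
                by_contra hcc
                exact hc (Finset.mem_sdiff.2 ⟨hcS, hcc⟩)
              have ha'S' : a' ∈ S' := Finset.mem_erase.2 ⟨har, step.1⟩
              have hR'ca : R' c a' := ⟨hCsub hcC, ha'S', by rw [hsym]; exact step.2.2⟩
              have : a' ∈ C := extendC c a' hcC hR'ca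
              exact (Finset.mem_sdiff.1 ha'S'').2 this
      have connS'' : ∀ a ∈ S'', ∀ b ∈ S'', Relation.ReflTransGen R'' a b := by
        intro a ha b hb
        exact (toR a ha).trans (by haveI : Std.Symm R'' := ⟨fun a b h => hR''symm h⟩; exact Std.Symm.symm _ _ (toR b hb))
      obtain ⟨l1, h1head, h1nd, h1fin, h1chain, h1last⟩ := ihS C hCssub z hzC connC
      obtain ⟨l2, h2head, h2nd, h2fin, h2chain, h2last⟩ := ihS S'' hS''ssub r hrS'' connS''
      have h1ne : l1 ≠ [] := by intro h; rw [h] at h1head; simp at h1head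
      have h2ne : l2 ≠ [] := by intro h; rw [h] at h2head; simp at h2head
      have h1rne : l1.reverse ≠ [] := by
        intro h; exact h1ne (List.reverse_eq_nil_iff.1 h)
      refine ⟨l2 ++ l1.reverse, ?_, ?_, ?_, ?_, ?_⟩
      · rw [List.head?_append_of_ne_nil _ h2ne]; exact h2head
      · refine List.Nodup.append h2nd (List.nodup_reverse.2 h1nd) ?_
        intro x hx1 hx2
        have hxS'' : x ∈ S'' := by rw [← h2fin]; exact List.mem_toFinset.2 hx1
        have hxC : x ∈ C := by
          rw [← h1fin]; exact List.mem_toFinset.2 (List.mem_reverse.1 hx2)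
        exact (Finset.mem_sdiff.1 hxS'').2 hxC
      · rw [List.toFinset_append, List.toFinset_reverse, h2fin, h1fin]
        exact Finset.sdiff_union_of_subset (hCsub.trans (Finset.erase_subset r S))
      · refine List.isChain_append.2 ⟨h2chain, ?_, ?_⟩
        · refine List.isChain_reverse.2 ?_
          exact h1chain.imp (fun a b h => show d b a ≤ 15 by rw [hsym b a]; exact h)
        · intro x hx y hy
          rw [List.head?_reverse] at hy
          have hdx : d r x ≤ 5 := h2last x hx
          have hdy : d z y ≤ 5 := h1last y hy
          have t1 : d x y ≤ d x r + d r y := htri x r y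
          have t2 : d r y ≤ d r z + d z y := htri r z y
          have t3 : d x r = d r x := hsym x r
          omega
      · intro e he
        rw [List.getLast?_append_of_ne_nil _ h1rne, List.getLast?_reverse, h1head] at he
        rw [Option.mem_some_iff] at he
        rw [← he]; exact hdrz

end Sek


lemma list_index_sum {V : Type} [DecidableEq V] {M : Type} [AddCommMonoid M]
    (f : V → M) (r : V) :
    ∀ (l : List V), l.Nodup → ∑ i ∈ Finset.range l.length, f (l.getD i r)
      = ∑ s ∈ l.toFinset, f s := by
  intro l
  induction l with
  | nil => simp
  | cons a t ih =>
    intro hnd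
    have hnd' : t.Nodup := hnd.of_cons
    have hat : a ∉ t.toFinset := by
      rw [List.mem_toFinset]
      exact (List.nodup_cons.1 hnd).1
    rw [List.toFinset_cons, Finset.sum_insert hat, List.length_cons,
      Finset.sum_range_succ']
    simp only [List.getD_cons_succ, List.getD_cons_zero]
    rw [ih hnd']
    exact add_comm _ _

end Aux

/-- **Lemma 5.** For every finite connected graph `G`, capacity function
`L`, positive integer `k` and feasible LP1 solution `(x, y)`, there are a `5`-feasible
assignment `(x', y')` and a `21`-caterpillar structure `(P, P')` for `(x', y')` such that
every vertex outside `V(P) ∪ V(P')` has an integral `y'`-value and the first and last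
entries of `P'` are `nil`. -/
theorem caterpillar_existence {V : Type} [Fintype V] (G : SimpleGraph V)
    (hG : G.Connected) (L : V → ℕ) (k : ℕ) (hk : 0 < k)
    (x : V → V → ℝ) (y : V → ℝ) (hfeas : LPFeasible G L k 1 x y) :
    ∃ (x' : V → V → ℝ) (y' : V → ℝ) (C : Caterpillar V),
      LPFeasible G L k 5 x' y' ∧
      IsCaterpillar G L y' 21 C ∧
      (∀ v : V, v ∉ C.spine → v ∉ C.leaves → ∃ n : ℤ, y' v = (n : ℝ)) ∧
      C.leaf 0 = none ∧ C.leaf (C.p + 1) = none := by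
  classical
  obtain ⟨hx0, hy0, hysum, hxy, hcapc, hdemc, hy1, hdistc⟩ := hfeas
  have hreach : ∀ u v : V, G.Reachable u v := fun u v => hG.preconnected u v
  have htri : ∀ a b c : V, G.dist a c ≤ G.dist a b + G.dist b c := fun a b c => hG.dist_triangle
  have hdcomm : ∀ a b : V, G.dist a b = G.dist b a := fun a b => G.dist_comm
  have hdself : ∀ a : V, G.dist a a = 0 := fun a => SimpleGraph.dist_self
  have hx1 : ∀ u v : V, x u v ≠ 0 → G.dist u v ≤ 1 := by
    intro u v h
    by_contra hle
    exact h (hdistc u v (fun hc => hle hc.2))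
  obtain ⟨S, hSne, hsep, hcov⟩ := exists_maximal_separated G hG
  obtain ⟨ctr, hctrS, hctr2, hctrfix, hnear⟩ := exists_ctr G hG S hSne hsep hcov
  have hcellmem : ∀ v : V, v ∈ cellOf ctr (ctr v) := fun v => (mem_cellOf ctr _ v).2 rfl
  have hcellctr : ∀ s v, v ∈ cellOf ctr s → ctr v = s := fun s v h => (mem_cellOf ctr s v).1 h
  have hdiam : ∀ u w : V, ctr u = ctr w → G.dist u w ≤ 4 := by
    intro u w h
    have h1 : G.dist u (ctr u) ≤ 2 := hctr2 u
    have h2 : G.dist w (ctr w) ≤ 2 := hctr2 w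
    have h3 := htri u (ctr u) w
    have h4 : G.dist (ctr u) w = G.dist w (ctr w) := by rw [h]; exact hdcomm _ _
    omega
  set mass : V → ℝ := fun s => ∑ v ∈ cellOf ctr s, y v with hmassdef
  set yN : V → ℝ := fun v => fill L (cellOf ctr (ctr v)) (mass (ctr v)) v with hyNdef
  have hyNcell : ∀ s, ∀ v ∈ cellOf ctr s, yN v = fill L (cellOf ctr s) (mass s) v := by
    intro s v hv
    rw [hyNdef]
    simp only
    rw [hcellctr s v hv]
  have hmass0 : ∀ s, 0 ≤ mass s := fun s => Finset.sum_nonneg (fun v _ => hy0 v)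
  have hmasscard : ∀ s, mass s ≤ ((cellOf ctr s).card : ℝ) := by
    intro s
    rw [hmassdef]
    simp only
    calc ∑ v ∈ cellOf ctr s, y v ≤ ∑ _v ∈ cellOf ctr s, (1:ℝ) :=
          Finset.sum_le_sum (fun v _ => hy1 v)
      _ = ((cellOf ctr s).card : ℝ) := by simp
  have hmass1 : ∀ s ∈ S, 1 ≤ mass s := by
    intro s hs
    have hxsub : ∀ u : V, u ∈ Finset.univ → u ∉ cellOf ctr s → x u s = 0 := by
      intro u _ hu
      by_contra hxne
      exact hu ((mem_cellOf ctr s u).2 (hnear u s hs (hx1 u s hxne)))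
    have h1 : ∑ u ∈ cellOf ctr s, x u s = 1 := by
      rw [Finset.sum_subset (Finset.subset_univ _) hxsub]
      exact hdemc s
    calc (1:ℝ) = ∑ u ∈ cellOf ctr s, x u s := h1.symm
      _ ≤ ∑ u ∈ cellOf ctr s, y u := Finset.sum_le_sum (fun u _ => hxy u s)
      _ = mass s := rfl
  have hyN0 : ∀ v, 0 ≤ yN v := fun v => fill_nonneg L _ _ (hmass0 _) v
  have hyN1 : ∀ v, yN v ≤ 1 := fun v => fill_le_one L _ _ v
  have hfib : ∀ f : V → ℝ, ∑ s ∈ S, ∑ v ∈ cellOf ctr s, f v = ∑ v, f v := by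
    intro f
    simpa [cellOf] using
      Finset.sum_fiberwise_of_maps_to (fun v (_ : v ∈ Finset.univ) => hctrS v) f
  have hcellsum : ∀ s, ∑ v ∈ cellOf ctr s, yN v = mass s := by
    intro s
    rw [Finset.sum_congr rfl (hyNcell s)]
    exact fill_sum L _ _ (hmass0 s) (hmasscard s)
  have hyNsum : ∑ v, yN v = (k : ℝ) := by
    calc ∑ v, yN v = ∑ s ∈ S, ∑ v ∈ cellOf ctr s, yN v := (hfib yN).symm
      _ = ∑ s ∈ S, mass s := Finset.sum_congr rfl (fun s _ => hcellsum s)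
      _ = ∑ v, y v := hfib y
      _ = (k : ℝ) := hysum
  -- representatives
  have hcellne : ∀ s ∈ S, (cellOf ctr s).Nonempty :=
    fun s hs => ⟨s, (mem_cellOf ctr s s).2 (hctrfix s hs)⟩
  set rep : V → V := fun s =>
    if h : (cellOf ctr s).Nonempty then maxElt L (cellOf ctr s) h else s with hrepdef
  have hrepmem : ∀ s ∈ S, rep s ∈ cellOf ctr s := by
    intro s hs
    rw [hrepdef]
    simp only
    rw [dif_pos (hcellne s hs)]
    exact maxElt_mem L _ _
  have hrepmax : ∀ s ∈ S, ∀ v ∈ cellOf ctr s, L v ≤ L (rep s) := by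
    intro s hs v hv
    rw [hrepdef]
    simp only
    rw [dif_pos (hcellne s hs)]
    exact le_maxElt L _ _ v hv
  have hrepone : ∀ s ∈ S, yN (rep s) = 1 := by
    intro s hs
    rw [hyNcell s _ (hrepmem s hs), hrepdef]
    simp only
    rw [dif_pos (hcellne s hs)]
    exact maxElt_fill_one L _ _ _ (hmass1 s hs)
  have hrep2 : ∀ s ∈ S, G.dist (rep s) s ≤ 2 := by
    intro s hs
    have := hctr2 (rep s)
    rwa [hcellctr s _ (hrepmem s hs)] at this
  -- capacities and demands
  set cap : V → ℝ := fun s => ∑ w ∈ cellOf ctr s, (L w : ℝ) * yN w with hcapdef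
  set dem : V → V → ℝ := fun s v => ∑ w ∈ cellOf ctr s, x w v with hdemdef
  have hcapmono : ∀ s, (∑ w ∈ cellOf ctr s, (L w : ℝ) * y w) ≤ cap s := by
    intro s
    rw [hcapdef]
    simp only
    have hcg : ∑ w ∈ cellOf ctr s, (L w : ℝ) * yN w
        = ∑ w ∈ cellOf ctr s, (L w : ℝ) * fill L (cellOf ctr s) (mass s) w :=
      Finset.sum_congr rfl (fun w hw => by rw [hyNcell s w hw])
    rw [hcg]
    refine exchange_le L (cellOf ctr s) (fill L (cellOf ctr s) (mass s)) y ?_ ?_ ?_ ?_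
    · exact (fill_sum L _ _ (hmass0 s) (hmasscard s))
    · exact fun v _ => hy0 v
    · exact fun v _ => hy1 v
    · intro v _ w hw h0 h1
      exact fill_threshold L _ _ (hmass0 s) v w hw h0 h1
  have hcap0 : ∀ s, 0 ≤ cap s := fun s =>
    Finset.sum_nonneg (fun w _ => mul_nonneg (Nat.cast_nonneg _) (hyN0 w))
  have hLcap : ∀ u : V, (L u : ℝ) ≤ cap (ctr u) := by
    intro u
    have hs : ctr u ∈ S := hctrS u
    have h1 : (L u : ℝ) ≤ (L (rep (ctr u)) : ℝ) := by
      exact_mod_cast hrepmax _ hs u (hcellmem u)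
    have h3 : (L (rep (ctr u)) : ℝ) * yN (rep (ctr u)) ≤ cap (ctr u) :=
      Finset.single_le_sum (f := fun w => (L w : ℝ) * yN w)
        (fun w _ => mul_nonneg (Nat.cast_nonneg _) (hyN0 w)) (hrepmem _ hs)
    rw [hrepone _ hs, mul_one] at h3
    linarith
  have hdem0 : ∀ s v, 0 ≤ dem s v := fun s v => Finset.sum_nonneg (fun w _ => hx0 w v)
  have hdem1 : ∀ s v, dem s v ≤ 1 := by
    intro s v
    calc dem s v ≤ ∑ w, x w v :=
          Finset.sum_le_sum_of_subset_of_nonneg (Finset.subset_univ _)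
            (fun w _ _ => hx0 w v)
      _ = 1 := hdemc v
  have hdemtot : ∀ v, ∑ s ∈ S, dem s v = 1 := fun v => (hfib (fun w => x w v)).trans (hdemc v)
  have hdemsum : ∀ s, ∑ v, dem s v ≤ cap s := by
    intro s
    have h1 : ∑ v, dem s v = ∑ w ∈ cellOf ctr s, ∑ v, x w v := by
      rw [hdemdef]
      exact Finset.sum_comm
    rw [h1]
    calc ∑ w ∈ cellOf ctr s, ∑ v, x w v ≤ ∑ w ∈ cellOf ctr s, (L w : ℝ) * y w :=
          Finset.sum_le_sum (fun w _ => hcapc w)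
      _ ≤ cap s := hcapmono s
  have hdemvanish : ∀ s v, ¬ 0 < cap s → dem s v = 0 := by
    intro s v hc
    have hc0 : cap s = 0 := le_antisymm (not_lt.1 hc) (hcap0 s)
    have hold : ∑ w ∈ cellOf ctr s, (L w : ℝ) * y w = 0 := by
      have hnn : 0 ≤ ∑ w ∈ cellOf ctr s, (L w : ℝ) * y w :=
        Finset.sum_nonneg (fun w _ => mul_nonneg (Nat.cast_nonneg _) (hy0 w))
      have := hcapmono s
      linarith
    have hterm : ∀ w ∈ cellOf ctr s, (L w : ℝ) * y w = 0 :=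
      (Finset.sum_eq_zero_iff_of_nonneg
        (fun w _ => mul_nonneg (Nat.cast_nonneg _) (hy0 w))).1 hold
    apply Finset.sum_eq_zero
    intro w hw
    rcases mul_eq_zero.1 (hterm w hw) with hL | hyw
    · have hsum0 : ∑ v', x w v' ≤ 0 := by
        have := hcapc w
        rw [hL, zero_mul] at this
        exact this
      have hle : x w v ≤ ∑ v', x w v' :=
        Finset.single_le_sum (fun v' _ => hx0 w v') (Finset.mem_univ v)
      have := hx0 w v
      linarith
    · have := hxy w v
      have := hx0 w v
      linarith
  set xN : V → V → ℝ := fun u v =>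
    if 0 < cap (ctr u) then dem (ctr u) v * ((L u : ℝ) * yN u) / cap (ctr u) else 0
    with hxNdef
  have hxN0 : ∀ u v, 0 ≤ xN u v := by
    intro u v
    rw [hxNdef]
    simp only
    split_ifs with h
    · apply div_nonneg _ (le_of_lt h)
      exact mul_nonneg (hdem0 _ _) (mul_nonneg (Nat.cast_nonneg _) (hyN0 u))
    · exact le_refl 0
  have hLP : LPFeasible G L k 5 xN yN := by
    refine ⟨hxN0, hyN0, hyNsum, ?_, ?_, ?_, hyN1, ?_⟩
    · -- x' ≤ y'
      intro u v
      rw [hxNdef]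
      simp only
      split_ifs with h
      · have hA : dem (ctr u) v * ((L u : ℝ) * yN u) ≤ 1 * ((L u : ℝ) * yN u) :=
          mul_le_mul_of_nonneg_right (hdem1 _ v)
            (mul_nonneg (Nat.cast_nonneg _) (hyN0 u))
        have hB : ((L u : ℝ) * yN u) / cap (ctr u) ≤ yN u := by
          rw [div_le_iff₀ h]
          have h1 := hLcap u
          nlinarith [hyN0 u]
        calc dem (ctr u) v * ((L u : ℝ) * yN u) / cap (ctr u)
            ≤ ((L u : ℝ) * yN u) / cap (ctr u) := by
              have h1 : dem (ctr u) v * ((L u : ℝ) * yN u) ≤ (L u : ℝ) * yN u := by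
                nlinarith [hdem0 (ctr u) v, hdem1 (ctr u) v,
                  mul_nonneg (Nat.cast_nonneg (L u) : (0:ℝ) ≤ (L u : ℝ)) (hyN0 u)]
              gcongr
          _ ≤ yN u := hB
      · exact hyN0 u
    · -- capacity
      intro u
      by_cases h : 0 < cap (ctr u)
      · have he : ∀ v, xN u v = dem (ctr u) v * (((L u : ℝ) * yN u) / cap (ctr u)) := by
          intro v
          rw [hxNdef]
          simp only [if_pos h]
          ring
        rw [Finset.sum_congr rfl (fun v _ => he v), ← Finset.sum_mul]
        have hnn : 0 ≤ ((L u : ℝ) * yN u) / cap (ctr u) :=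
          div_nonneg (mul_nonneg (Nat.cast_nonneg _) (hyN0 u)) (le_of_lt h)
        calc (∑ v, dem (ctr u) v) * (((L u : ℝ) * yN u) / cap (ctr u))
            ≤ cap (ctr u) * (((L u : ℝ) * yN u) / cap (ctr u)) :=
              mul_le_mul_of_nonneg_right (hdemsum (ctr u)) hnn
          _ = (L u : ℝ) * yN u := by
              rw [mul_div_assoc'] at *
              field_simp
      · have he : ∀ v, xN u v = 0 := by
          intro v
          rw [hxNdef]
          simp only [if_neg h]
        rw [Finset.sum_congr rfl (fun v _ => he v), Finset.sum_const, smul_zero]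
        exact mul_nonneg (Nat.cast_nonneg _) (hyN0 u)
    · -- every client fully served
      intro v
      calc ∑ u, xN u v = ∑ s ∈ S, ∑ u ∈ cellOf ctr s, xN u v := (hfib (fun u => xN u v)).symm
        _ = ∑ s ∈ S, dem s v := by
            refine Finset.sum_congr rfl ?_
            intro s hs
            by_cases h : 0 < cap s
            · have he : ∀ u ∈ cellOf ctr s, xN u v
                  = dem s v * ((L u : ℝ) * yN u) / cap s := by
                intro u hu
                rw [hxNdef]
                simp only
                rw [hcellctr s u hu, if_pos h]
              rw [Finset.sum_congr rfl he]
              have hfact : ∀ u ∈ cellOf ctr s, dem s v * ((L u : ℝ) * yN u) / cap s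
                  = (dem s v / cap s) * ((L u : ℝ) * yN u) := fun u _ => by ring
              rw [Finset.sum_congr rfl hfact, ← Finset.mul_sum]
              have hc : ∑ u ∈ cellOf ctr s, (L u : ℝ) * yN u = cap s := rfl
              rw [hc]
              field_simp
            · have he : ∀ u ∈ cellOf ctr s, xN u v = 0 := by
                intro u hu
                rw [hxNdef]
                simp only
                rw [hcellctr s u hu, if_neg h]
              rw [Finset.sum_congr rfl he, Finset.sum_const, smul_zero]
              exact (hdemvanish s v h).symm
        _ = 1 := hdemtot v
    · -- distance ≤ 5
      intro u v hcon
      by_contra hne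
      have h5 : ¬ G.dist u v ≤ 5 := fun hd => hcon ⟨hreach u v, hd⟩
      apply hne
      rw [hxNdef]
      simp only
      split_ifs with h
      · have hdz : dem (ctr u) v = 0 := by
          by_contra hdz
          obtain ⟨w, hw, hxw⟩ := Finset.exists_ne_zero_of_sum_ne_zero hdz
          have hd1 : G.dist w v ≤ 1 := hx1 w v hxw
          have hd4 : G.dist u w ≤ 4 := hdiam u w (by rw [hcellctr _ w hw])
          have := htri u w v
          omega
        rw [hdz, zero_mul, zero_div]
      · rfl
    -- connectivity of the center set under the ≤5 relation
  have hstep5 : ∀ a b : V, G.Adj a b → G.dist (ctr a) (ctr b) ≤ 5 := by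
    intro a b hab
    have h1 : G.dist a b ≤ 1 := by simpa using SimpleGraph.dist_le hab.toWalk
    have h2 := hctr2 a
    have h3 := hctr2 b
    have t1 := htri (ctr a) a (ctr b)
    have t2 := htri a b (ctr b)
    have c1 : G.dist (ctr a) a = G.dist a (ctr a) := hdcomm _ _
    have c2 : G.dist b (ctr b) = G.dist (ctr b) b := hdcomm _ _
    have c3 : G.dist (ctr b) b = G.dist b (ctr b) := hdcomm _ _
    omega
  have hwalk : ∀ (a b : V) (w : G.Walk a b),
      Relation.ReflTransGen (fun p q => p ∈ S ∧ q ∈ S ∧ G.dist p q ≤ 5) (ctr a) (ctr b) := by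
    intro a b w
    induction w with
    | nil => exact Relation.ReflTransGen.refl
    | cons hadj _ ih =>
      exact Relation.ReflTransGen.head ⟨hctrS _, hctrS _, hstep5 _ _ hadj⟩ ih
  have hSconn : ∀ a ∈ S, ∀ b ∈ S,
      Relation.ReflTransGen (fun p q => p ∈ S ∧ q ∈ S ∧ G.dist p q ≤ 5) a b := by
    intro a ha b hb
    have h := hwalk a b (hreach a b).some
    rwa [hctrfix a ha, hctrfix b hb] at h
  obtain ⟨r, hr⟩ := hSne
  obtain ⟨l, hlh, hlnd, hlfin, hlch, _⟩ := sekanina G.dist hdcomm hdself htri S r hr hSconn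
  set p := l.length with hpdef
  set gtD : ℕ → V := fun j => l.getD j r with hgtDdef
  have hmemS : ∀ j, j < p → gtD j ∈ S := by
    intro j hj
    rw [hgtDdef]
    simp only
    rw [List.getD_eq_getElem l r hj, ← hlfin]
    exact List.mem_toFinset.2 (l.getElem_mem hj)
  have hgtDinj : ∀ i j, i < p → j < p → gtD i = gtD j → i = j := by
    intro i j hi hj hij
    rw [hgtDdef] at hij
    simp only at hij
    rw [List.getD_eq_getElem l r hi, List.getD_eq_getElem l r hj] at hij
    exact (List.Nodup.getElem_inj_iff hlnd).1 hij
  have hchain : ∀ j, j + 1 < p → G.dist (gtD j) (gtD (j+1)) ≤ 15 := by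
    intro j hj
    have hc := List.isChain_iff_getElem.1 hlch j (by omega)
    rw [hgtDdef]
    simp only
    rw [List.getD_eq_getElem l r (by omega), List.getD_eq_getElem l r (by omega)]
    simpa using hc
  set leafF : V → Option V := fun s =>
    if h : ∃ w, w ∈ cellOf ctr s ∧ 0 < yN w ∧ yN w < 1 then some h.choose else none
    with hleafFdef
  have hleafF_some : ∀ s w, leafF s = some w → w ∈ cellOf ctr s ∧ 0 < yN w ∧ yN w < 1 := by
    intro s w h
    rw [hleafFdef] at h
    simp only at h
    split_ifs at h with hex
    · obtain ⟨h1, h2, h3⟩ := hex.choose_spec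
      rw [Option.some.injEq] at h
      rw [← h]
      exact ⟨h1, h2, h3⟩
  have hfracuniq : ∀ s, ∀ v w, v ∈ cellOf ctr s → w ∈ cellOf ctr s →
      0 < yN v → yN v < 1 → 0 < yN w → yN w < 1 → v = w := by
    intro s v w hv hw h1 h2 h3 h4
    rw [hyNcell s v hv] at h1 h2
    rw [hyNcell s w hw] at h3 h4
    exact fill_unique_frac L _ _ (hmass0 s) v w h1 h2 h3 h4
  have hleafF_of_frac : ∀ s w, w ∈ cellOf ctr s → 0 < yN w → yN w < 1 →
      leafF s = some w := by
    intro s w hw h0 h1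
    have hex : ∃ w', w' ∈ cellOf ctr s ∧ 0 < yN w' ∧ yN w' < 1 := ⟨w, hw, h0, h1⟩
    rw [hleafFdef]
    simp only
    rw [dif_pos hex, Option.some.injEq]
    obtain ⟨hc1, hc2, hc3⟩ := hex.choose_spec
    exact hfracuniq s _ w hc1 hw hc2 hc3 h0 h1
  set Cat : Caterpillar V :=
    ⟨p, fun i => rep (gtD (i-1)), fun i => if 1 ≤ i ∧ i ≤ p then leafF (gtD (i-1)) else none⟩
    with hCatdef
  have hCp : Cat.p = p := rfl
  have hCvtx : ∀ i, Cat.vtx i = rep (gtD (i-1)) := fun i => rfl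
  have hCleaf : ∀ i, Cat.leaf i = if 1 ≤ i ∧ i ≤ p then leafF (gtD (i-1)) else none :=
    fun i => rfl
  have hleaf0 : Cat.leaf 0 = none := by
    rw [hCleaf]
    have : ¬ (1 ≤ 0 ∧ 0 ≤ p) := by omega
    rw [if_neg this]
  have hleafp1 : Cat.leaf (Cat.p + 1) = none := by
    rw [hCleaf, hCp]
    have : ¬ (1 ≤ p + 1 ∧ p + 1 ≤ p) := by omega
    rw [if_neg this]
  have hspine1 : ∀ w, w ∈ Cat.spine → yN w = 1 := by
    intro w hw
    obtain ⟨i, h1, h2, h3⟩ := hw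
    rw [hCp] at h2
    rw [← h3, hCvtx]
    exact hrepone _ (hmemS (i-1) (by omega))
  have hzex : ∀ s : V, ∃ z : ℤ, (leafF s).elim 0 yN = mass s - (z : ℝ) := by
    intro s
    by_cases hex : ∃ w', w' ∈ cellOf ctr s ∧ 0 < yN w' ∧ yN w' < 1
    · obtain ⟨hf1, hf2, hf3⟩ := hex.choose_spec
      have hleq : leafF s = some hex.choose := by
        rw [hleafFdef]
        simp only
        rw [dif_pos hex]
      have h01 : ∀ w ∈ (cellOf ctr s).erase hex.choose, yN w = 0 ∨ yN w = 1 := by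
        intro w hw
        have hwc : w ∈ cellOf ctr s := Finset.mem_of_mem_erase hw
        by_contra hno
        push_neg at hno
        have h0 : 0 < yN w := lt_of_le_of_ne (hyN0 w) (Ne.symm hno.1)
        have h1 : yN w < 1 := lt_of_le_of_ne (hyN1 w) hno.2
        exact (Finset.mem_erase.1 hw).1 (hfracuniq s w _ hwc hf1 h0 h1 hf2 hf3)
      refine ⟨∑ w ∈ (cellOf ctr s).erase hex.choose, (if yN w = 1 then (1:ℤ) else 0), ?_⟩
      rw [hleq]
      simp only [Option.elim]
      have hcast : ((∑ w ∈ (cellOf ctr s).erase hex.choose,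
            (if yN w = 1 then (1:ℤ) else 0) : ℤ) : ℝ)
          = ∑ w ∈ (cellOf ctr s).erase hex.choose, yN w := by
        push_cast
        refine Finset.sum_congr rfl ?_
        intro w hw
        rcases h01 w hw with h | h
        · rw [h]; norm_num
        · rw [h]; norm_num
      rw [hcast]
      have hsplit : mass s = yN hex.choose + ∑ w ∈ (cellOf ctr s).erase hex.choose, yN w := by
        rw [← hcellsum s]
        exact (Finset.add_sum_erase _ _ hf1).symm
      rw [hsplit]
      ring
    · have hleq : leafF s = none := by
        rw [hleafFdef]
        simp only
        rw [dif_neg hex]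
      have h01 : ∀ w ∈ cellOf ctr s, yN w = 0 ∨ yN w = 1 := by
        intro w hw
        by_contra hno
        push_neg at hno
        exact hex ⟨w, hw, lt_of_le_of_ne (hyN0 w) (Ne.symm hno.1),
          lt_of_le_of_ne (hyN1 w) hno.2⟩
      refine ⟨∑ w ∈ cellOf ctr s, (if yN w = 1 then (1:ℤ) else 0), ?_⟩
      rw [hleq]
      simp only [Option.elim]
      have hcast : ((∑ w ∈ cellOf ctr s, (if yN w = 1 then (1:ℤ) else 0) : ℤ) : ℝ)
          = ∑ w ∈ cellOf ctr s, yN w := by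
        push_cast
        refine Finset.sum_congr rfl ?_
        intro w hw
        rcases h01 w hw with h | h
        · rw [h]; norm_num
        · rw [h]; norm_num
      rw [hcast, hcellsum s]
      ring
  choose zf hzf using hzex
  have hcat : IsCaterpillar G L yN 21 Cat := by
    refine ⟨?_, ?_, ?_, ?_, ?_, ?_, ?_, ?_, ?_⟩
    · -- spine distinct
      intro i j h1 hij hj
      rw [hCp] at hj
      rw [hCvtx, hCvtx]
      intro heq
      have hi1 : i - 1 < p := by omega
      have hj1 : j - 1 < p := by omega
      have hsi : gtD (i-1) ∈ S := hmemS _ hi1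
      have hsj : gtD (j-1) ∈ S := hmemS _ hj1
      have hci : ctr (rep (gtD (i-1))) = gtD (i-1) := hcellctr _ _ (hrepmem _ hsi)
      have hcj : ctr (rep (gtD (j-1))) = gtD (j-1) := hcellctr _ _ (hrepmem _ hsj)
      have heq2 : gtD (i-1) = gtD (j-1) := by rw [← hci, ← hcj, heq]
      have := hgtDinj _ _ hi1 hj1 heq2
      omega
    · -- spine fully open
      intro i h1 h2
      rw [hCp] at h2
      rw [hCvtx]
      exact hrepone _ (hmemS _ (by omega))
    · -- consecutive spine distance
      intro i h1 h2
      rw [hCp] at h2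
      rw [hCvtx, hCvtx]
      have hi1 : i - 1 + 1 < p := by omega
      have heq : (i+1) - 1 = i - 1 + 1 := by omega
      rw [heq]
      have hc := hchain (i-1) hi1
      have hsi : gtD (i-1) ∈ S := hmemS _ (by omega)
      have hsj : gtD (i-1+1) ∈ S := hmemS _ hi1
      have d1 : G.dist (rep (gtD (i-1))) (gtD (i-1)) ≤ 2 := hrep2 _ hsi
      have d2 : G.dist (rep (gtD (i-1+1))) (gtD (i-1+1)) ≤ 2 := hrep2 _ hsj
      have t1 := htri (rep (gtD (i-1))) (gtD (i-1)) (rep (gtD (i-1+1)))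
      have t2 := htri (gtD (i-1)) (gtD (i-1+1)) (rep (gtD (i-1+1)))
      have c1 : G.dist (gtD (i-1+1)) (rep (gtD (i-1+1)))
          = G.dist (rep (gtD (i-1+1))) (gtD (i-1+1)) := hdcomm _ _
      omega
    · -- leaves avoid the spine
      intro i _ w hle
      rw [hCleaf] at hle
      split_ifs at hle with hcond
      · have hfrac := hleafF_some _ _ hle
        intro hsp
        have := hspine1 w hsp
        linarith [hfrac.2.2]
    · -- leaf properties
      intro i h1 h2 w hle
      rw [hCp] at h2
      rw [hCleaf] at hle
      rw [if_pos ⟨h1, h2⟩] at hle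
      have hfrac := hleafF_some _ _ hle
      have hs : gtD (i-1) ∈ S := hmemS _ (by omega)
      refine ⟨?_, hfrac.2.1, hfrac.2.2, ?_⟩
      · rw [hCvtx]
        exact hrepmax _ hs w hfrac.1
      · rw [hCvtx]
        have d1 : G.dist (rep (gtD (i-1))) (gtD (i-1)) ≤ 2 := hrep2 _ hs
        have d2 : G.dist w (gtD (i-1)) ≤ 2 := by
          have := hctr2 w
          rwa [hcellctr _ w hfrac.1] at this
        have t1 := htri (rep (gtD (i-1))) (gtD (i-1)) w
        have c1 : G.dist (gtD (i-1)) w = G.dist w (gtD (i-1)) := hdcomm _ _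
        omega
    · -- leaf 0 vacuous
      intro w hw
      rw [hleaf0] at hw
      exact absurd hw (by simp)
    · -- leaf (p+1) vacuous
      intro w hw
      rw [hleafp1] at hw
      exact absurd hw (by simp)
    · -- leaves pairwise distinct
      intro i j hij hj w w' hwi hwj
      rw [hCleaf] at hwi hwj
      split_ifs at hwi with hci
      · split_ifs at hwj with hcj
        · have hf1 := hleafF_some _ _ hwi
          have hf2 := hleafF_some _ _ hwj
          intro heq
          have e1 : ctr w = gtD (i-1) := hcellctr _ _ hf1.1
          have e2 : ctr w' = gtD (j-1) := hcellctr _ _ hf2.1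
          have heq2 : gtD (i-1) = gtD (j-1) := by rw [← e1, ← e2, heq]
          have := hgtDinj _ _ (by omega) (by omega) heq2
          omega
    · -- integral total of leaf values
      refine ⟨(k:ℤ) - ∑ j ∈ Finset.range p, zf (gtD j), ?_⟩
      have hF0 : (Cat.leaf 0).elim 0 yN = 0 := by rw [hleaf0]; rfl
      have hFp1 : ((Cat.leaf (p+1)).elim 0 yN : ℝ) = 0 := by
        rw [show Cat.leaf (p+1) = none from hleafp1]
        rfl
      have hexp : Cat.p + 2 = (p + 1) + 1 := rfl
      rw [hexp, Finset.sum_range_succ, Finset.sum_range_succ', hFp1, add_zero, hF0, add_zero]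
      have hFi : ∀ i ∈ Finset.range p,
          (Cat.leaf (i+1)).elim 0 yN = mass (gtD i) - (zf (gtD i) : ℝ) := by
        intro i hi
        rw [Finset.mem_range] at hi
        rw [hCleaf]
        have hcond : 1 ≤ i+1 ∧ i+1 ≤ p := by omega
        rw [if_pos hcond]
        have he : (i+1) - 1 = i := by omega
        rw [he]
        exact hzf (gtD i)
      rw [Finset.sum_congr rfl hFi, Finset.sum_sub_distrib]
      have hm : ∑ i ∈ Finset.range p, mass (gtD i) = (k:ℝ) := by
        have hls := list_index_sum mass r l hlnd
        rw [hgtDdef]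
        simp only
        rw [hpdef, hls, hlfin]
        calc ∑ s ∈ S, mass s = ∑ v, y v := hfib y
          _ = (k:ℝ) := hysum
      rw [hm]
      push_cast
      ring
  refine ⟨xN, yN, Cat, hLP, hcat, ?_, hleaf0, hleafp1⟩
  intro v hsp hlv
  by_cases h1 : 0 < yN v
  · by_cases h2 : yN v < 1
    · exfalso
      have hsv : ctr v ∈ S := hctrS v
      have hlf : leafF (ctr v) = some v := hleafF_of_frac (ctr v) v (hcellmem v) h1 h2
      have hmem : ctr v ∈ l := List.mem_toFinset.1 (by rw [hlfin]; exact hsv)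
      obtain ⟨j, hj, hje⟩ := List.mem_iff_getElem.1 hmem
      apply hlv
      refine ⟨j+1, by rw [hCp]; omega, ?_⟩
      rw [hCleaf]
      rw [if_pos ⟨by omega, by omega⟩]
      have he : (j+1) - 1 = j := by omega
      rw [he]
      have hg : gtD j = ctr v := by
        rw [hgtDdef]
        simp only
        rw [List.getD_eq_getElem l r hj]
        exact hje
      rw [hg]
      exact hlf
    · have he : yN v = 1 := le_antisymm (hyN1 v) (not_lt.1 h2)
      exact ⟨1, by rw [he]; norm_num⟩
  · have he : yN v = 0 := le_antisymm (not_lt.1 h1) (hyN0 v)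
    exact ⟨0, by rw [he]; norm_num⟩
end

section
/- Let P = ((v_1, …, v_p), (v'_0, …, v'_{p+1})) be a dangerous caterpillar structure for an assignment (x, y), let i be an index with v_i ∈ Γ(P) and L(v_i) = min_{v ∈ Γ(P)} L(v), and let j be an index with v'_j ≠ nil and L(v'_j) > L(v_i). Then for every index a with min(i, j) ≤ a ≤ max(i, j) and 1 ≤ a ≤ p, we have L(v_a) ≥ L(v_i). -/
/-- **Lemma 6.** Let `C` be a dangerous caterpillar structure, let `i` be
an index with `vtx i ∈ Γ(C)` of minimum capacity in `Γ(C)`, and let `j` be an index whose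
leaf `leaf j` is non-nil with capacity larger than `L (vtx i)`.  Then every spine vertex
`vtx a` with `min i j ≤ a ≤ max i j` satisfies `L (vtx i) ≤ L (vtx a)`. -/
theorem gamma_interval_capacity {V : Type} [Fintype V] (G : SimpleGraph V)
    (hG : G.Connected) (L : V → ℕ) (y : V → ℝ) (δ : ℕ) (hδ : 0 < δ)
    (C : Caterpillar V) (hcat : IsCaterpillar G L y δ C)
    (i : ℕ) (hi1 : 1 ≤ i) (hip : i ≤ C.p)
    (hiΓ : C.vtx i ∈ Gamma L C) (hmin : ∀ w ∈ Gamma L C, L (C.vtx i) ≤ L w)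
    (j : ℕ) (hj : j ≤ C.p + 1) (w' : V) (hw' : C.leaf j = some w')
    (hLw' : L (C.vtx i) < L w') :
    ∀ a, min i j ≤ a → a ≤ max i j → 1 ≤ a → a ≤ C.p → L (C.vtx i) ≤ L (C.vtx a) := by
  intro a hmina hmaxa ha1 hap
  obtain ⟨hdist, hy1, hd, hnospine, hleafcond, h0, hpp1, hdistinct, hint⟩ := hcat
  obtain ⟨i', h1', h2', heq, i₀, i₁, hii0, hii1, hi1p, ⟨w₀, hw₀, hLw₀⟩, ⟨w₁, hw₁, hLw₁⟩⟩ := hiΓ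
  have hi'i : i' = i := by
    rcases lt_trichotomy i' i with h | h | h
    · exact absurd heq (hdist i' i h1' h hip)
    · exact h
    · exact absurd heq.symm (hdist i i' hi1 h h2')
  by_contra hcon
  push_neg at hcon
  by_cases haj : a = j
  · subst haj
    have := (hleafcond a ha1 hap w' hw').1
    omega
  by_cases hai : a = i
  · subst hai; omega
  have hcase : (i < a ∧ a < j) ∨ (j < a ∧ a < i) := by omega
  have hmem : C.vtx a ∈ Gamma L C := by
    rcases hcase with ⟨h1, h2⟩ | ⟨h1, h2⟩
    · exact ⟨a, ha1, hap, rfl, i₀, j, by omega, h2, hj, ⟨w₀, hw₀, by omega⟩, ⟨w', hw', by omega⟩⟩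
    · exact ⟨a, ha1, hap, rfl, j, i₁, h1, by omega, hi1p, ⟨w', hw', by omega⟩, ⟨w₁, hw₁, by omega⟩⟩
  have := hmin _ hmem
  omega
end

section
/- Let P = ((v_1, …, v_p), (v'_0, …, v'_{p+1})) be a dangerous non-separable caterpillar structure for an assignment (x, y), let ℓ = min_{v ∈ Γ(P)} L(v), and let I = { i : 0 ≤ i ≤ p+1, v'_i ≠ nil and L(v'_i) > ℓ }. Then ∑_{i ∈ I} (1 − y_{v'_i}) < 2. -/
/-- A dangerous caterpillar structure `C` is separable if there is an index `i` with
`vtx i ∈ Γ(C)` of minimum capacity in `Γ(C)` such that, on the right side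
(indices `i < j ≤ p + 1`) or on the left side (indices `0 ≤ j < i`),
`S₁ ≥ ⌈S₂⌉ - S₂`, where `S₂` is the sum of the `y`-values of the non-nil leaves on that
side and `S₁` is the sum of `1 - y w` over the non-nil leaves `w` on that side with
`L w > L (vtx i)`. -/
def Separable {V : Type} (L : V → ℕ) (y : V → ℝ) (C : Caterpillar V) : Prop :=
  ∃ i, 1 ≤ i ∧ i ≤ C.p ∧ C.vtx i ∈ Gamma L C ∧
    (∀ w ∈ Gamma L C, L (C.vtx i) ≤ L w) ∧
    (((⌈∑ j ∈ Finset.Icc (i + 1) (C.p + 1), (C.leaf j).elim 0 y⌉ : ℝ) -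
        ∑ j ∈ Finset.Icc (i + 1) (C.p + 1), (C.leaf j).elim 0 y ≤
        ∑ j ∈ Finset.Icc (i + 1) (C.p + 1),
          (C.leaf j).elim 0 (fun w => if L (C.vtx i) < L w then 1 - y w else 0)) ∨
     ((⌈∑ j ∈ Finset.range i, (C.leaf j).elim 0 y⌉ : ℝ) -
        ∑ j ∈ Finset.range i, (C.leaf j).elim 0 y ≤
        ∑ j ∈ Finset.range i,
          (C.leaf j).elim 0 (fun w => if L (C.vtx i) < L w then 1 - y w else 0)))

/-- **Lemma 7.** Let `C` be a dangerous non-separable caterpillar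
structure, let `ℓ` be the minimum capacity of a vertex of `Γ(C)` and let `I` be the set of
indices `i ≤ p + 1` whose leaf is non-nil of capacity larger than `ℓ`.  Then
`∑_{i ∈ I} (1 - y (leaf i)) < 2`. -/
theorem dangerous_nonseparable_bound {V : Type} [Fintype V] (G : SimpleGraph V)
    (hG : G.Connected) (L : V → ℕ) (y : V → ℝ) (δ : ℕ) (hδ : 0 < δ)
    (C : Caterpillar V) (hcat : IsCaterpillar G L y δ C)
    (hdang : (Gamma L C).Nonempty) (hnsep : ¬ Separable L y C)
    (ℓ : ℕ) (hℓmem : ∃ w ∈ Gamma L C, L w = ℓ) (hℓmin : ∀ w ∈ Gamma L C, ℓ ≤ L w) :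
    ∑ i ∈ Finset.range (C.p + 2),
        (C.leaf i).elim 0 (fun w => if ℓ < L w then 1 - y w else 0) < 2 := by
  obtain ⟨w, hwΓ, hwℓ⟩ := hℓmem
  have hwΓ' := hwΓ
  obtain ⟨i, hi1, hi2, hvi, -⟩ := hwΓ'
  have hvL : L (C.vtx i) = ℓ := by rw [hvi, hwℓ]
  have hviΓ : C.vtx i ∈ Gamma L C := by rw [hvi]; exact hwΓ
  have hmin : ∀ w' ∈ Gamma L C, L (C.vtx i) ≤ L w' := by
    intro w' hw'; rw [hvL]; exact hℓmin w' hw'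
  have hno : ¬ (((⌈∑ j ∈ Finset.Icc (i + 1) (C.p + 1), (C.leaf j).elim 0 y⌉ : ℝ) -
        ∑ j ∈ Finset.Icc (i + 1) (C.p + 1), (C.leaf j).elim 0 y ≤
        ∑ j ∈ Finset.Icc (i + 1) (C.p + 1),
          (C.leaf j).elim 0 (fun w => if L (C.vtx i) < L w then 1 - y w else 0)) ∨
     ((⌈∑ j ∈ Finset.range i, (C.leaf j).elim 0 y⌉ : ℝ) -
        ∑ j ∈ Finset.range i, (C.leaf j).elim 0 y ≤
        ∑ j ∈ Finset.range i,
          (C.leaf j).elim 0 (fun w => if L (C.vtx i) < L w then 1 - y w else 0))) := by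
    intro h
    exact hnsep ⟨i, hi1, hi2, hviΓ, hmin, h⟩
  push_neg at hno
  obtain ⟨hR, hL⟩ := hno
  rw [hvL] at hR hL
  set f : ℕ → ℝ := fun j => (C.leaf j).elim 0 (fun w => if ℓ < L w then 1 - y w else 0)
    with hf
  have hRlt : ∑ j ∈ Finset.Icc (i + 1) (C.p + 1), f j < 1 := by
    calc ∑ j ∈ Finset.Icc (i + 1) (C.p + 1), f j
        < (⌈∑ j ∈ Finset.Icc (i + 1) (C.p + 1), (C.leaf j).elim 0 y⌉ : ℝ) -
          ∑ j ∈ Finset.Icc (i + 1) (C.p + 1), (C.leaf j).elim 0 y := hR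
      _ < 1 := by
          have := Int.ceil_lt_add_one (∑ j ∈ Finset.Icc (i + 1) (C.p + 1),
            (C.leaf j).elim 0 y)
          linarith
  have hLlt : ∑ j ∈ Finset.range i, f j < 1 := by
    calc ∑ j ∈ Finset.range i, f j
        < (⌈∑ j ∈ Finset.range i, (C.leaf j).elim 0 y⌉ : ℝ) -
          ∑ j ∈ Finset.range i, (C.leaf j).elim 0 y := hL
      _ < 1 := by
          have := Int.ceil_lt_add_one (∑ j ∈ Finset.range i, (C.leaf j).elim 0 y)
          linarith
  have hfi : f i = 0 := by
    rw [hf]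
    cases hli : C.leaf i with
    | none => simp [hli]
    | some w' =>
      have h5 := hcat.2.2.2.2.1 i hi1 hi2 w' hli
      have : ¬ ℓ < L w' := by
        have : L w' ≤ ℓ := hvL ▸ h5.1
        omega
      simp [hli, this]
  have hsplit : ∑ j ∈ Finset.range (C.p + 2), f j =
      ∑ j ∈ Finset.range i, f j + (f i + ∑ j ∈ Finset.Icc (i + 1) (C.p + 1), f j) := by
    have h1 : Finset.Icc (i + 1) (C.p + 1) = Finset.Ico (i + 1) (C.p + 2) := by
      rw [← Finset.Ico_add_one_right_eq_Icc]; rfl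
    rw [h1, Finset.range_eq_Ico,
      ← Finset.sum_Ico_consecutive f (Nat.zero_le i) (by omega : i ≤ C.p + 2),
      Finset.sum_eq_sum_Ico_succ_bot (by omega : i < C.p + 2)]
    rw [Finset.range_eq_Ico]
  rw [hsplit, hfi]
  linarith
end
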